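/- Let u be a symplectic transformation of E whose minimal polynomial factors as d = d₁·d₂ with d₁, d₂ ∈ K[X] coprime, and suppose reverse(d₁) = c₁ • d₁ and reverse(d₂) = c₂ • d₂ for some nonzero scalars c₁, c₂ ∈ K. Then: (a) E is the direct sum of the u-invariant subspaces E₁ = ker d₁(u) and E₂ = ker d₂(u); (b) ⟨x, y⟩ = 0 whenever x ∈ E₁ and y ∈ E₂; (c) the restriction of ⟨·,·⟩ to each of E₁ and E₂ is nondegenerate. -/

import Mathlib

open Polynomial

private lemma pow_mul_aeval_symm {K E : Type*} [Field K] [AddCommGroup E] [Module K E]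
    (u : E ≃ₗ[K] E) (d : K[X]) :
    (u : Module.End K E) ^ d.natDegree * aeval (u.symm : Module.End K E) d
      = aeval (u : Module.End K E) d.reverse := by
  set U : Module.End K E := (u : Module.End K E) with hUdef
  set V : Module.End K E := (u.symm : Module.End K E) with hVdef
  have hUV : U * V = 1 := by
    apply LinearMap.ext; intro x
    simp [hUdef, hVdef, Module.End.mul_apply]
  have hVU : V * U = 1 := by
    apply LinearMap.ext; intro x
    simp [hUdef, hVdef, Module.End.mul_apply]
  have hcomm : Commute U V := by
    unfold Commute SemiconjBy; rw [hUV, hVU]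
  have hcancel : ∀ j, j ≤ d.natDegree → U ^ d.natDegree * V ^ j = U ^ (d.natDegree - j) := by
    intro j hj
    have h1 : U ^ j * V ^ j = 1 := by rw [← hcomm.mul_pow, hUV, one_pow]
    calc U ^ d.natDegree * V ^ j = U ^ (d.natDegree - j) * (U ^ j * V ^ j) := by
          rw [← mul_assoc, ← pow_add, Nat.sub_add_cancel hj]
      _ = U ^ (d.natDegree - j) := by rw [h1, mul_one]
  have hlhs : U ^ d.natDegree * aeval V d
      = ∑ i ∈ Finset.range (d.natDegree + 1), d.coeff i • U ^ (d.natDegree - i) := by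
    rw [aeval_eq_sum_range V, Finset.mul_sum]
    refine Finset.sum_congr rfl fun i hi => ?_
    have hi' : i ≤ d.natDegree := Nat.lt_succ_iff.mp (Finset.mem_range.mp hi)
    rw [mul_smul_comm, hcancel i hi']
  have hrhs : aeval U d.reverse
      = ∑ i ∈ Finset.range (d.natDegree + 1), d.coeff i • U ^ (d.natDegree - i) :=
    calc aeval U d.reverse
      = ∑ i ∈ Finset.range (d.natDegree + 1), d.reverse.coeff i • U ^ i :=
        aeval_eq_sum_range' (Nat.lt_succ_of_le d.reverse_natDegree_le) U
    _ = ∑ i ∈ Finset.range (d.natDegree + 1),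
          d.reverse.coeff (d.natDegree + 1 - 1 - i) • U ^ (d.natDegree + 1 - 1 - i) :=
        (Finset.sum_range_reflect (fun j => d.reverse.coeff j • U ^ j) (d.natDegree + 1)).symm
    _ = ∑ i ∈ Finset.range (d.natDegree + 1), d.coeff i • U ^ (d.natDegree - i) := by
        refine Finset.sum_congr rfl fun i hi => ?_
        have hi' : i ≤ d.natDegree := Nat.lt_succ_iff.mp (Finset.mem_range.mp hi)
        have h1 : d.natDegree + 1 - 1 - i = d.natDegree - i := by omega
        rw [h1, coeff_reverse, revAt_le (Nat.sub_le _ _), Nat.sub_sub_self hi']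
  rw [hlhs, hrhs]

/-- If the minimal polynomial of a symplectic `u` factors as `d₁ * d₂` with `d₁, d₂` coprime and
`reverse dᵢ = cᵢ • dᵢ` (`cᵢ ≠ 0`), then `E` is the direct sum of the `u`-invariant subspaces
`E₁ = ker d₁(u)` and `E₂ = ker d₂(u)`, these are orthogonal to each other, and the form is
nondegenerate on each of them. -/
theorem stmt_6 {K E : Type*} [Field K] (hchar : (2 : K) ≠ 0)
    [AddCommGroup E] [Module K E] [FiniteDimensional K E]
    (B : E →ₗ[K] E →ₗ[K] K) (halt : ∀ x, B x x = 0)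
    (hnd : ∀ x, (∀ y, B x y = 0) → x = 0)
    (u : E ≃ₗ[K] E) (hu : ∀ x y, B (u x) (u y) = B x y)
    (d₁ d₂ : K[X]) (hcop : IsCoprime d₁ d₂)
    (c₁ c₂ : K) (hc₁ : c₁ ≠ 0) (hc₂ : c₂ ≠ 0)
    (hrev₁ : d₁.reverse = c₁ • d₁) (hrev₂ : d₂.reverse = c₂ • d₂)
    (hmin : minpoly K (u : Module.End K E) = d₁ * d₂)
    (E₁ E₂ : Submodule K E)
    (hE₁ : E₁ = LinearMap.ker (aeval (u : Module.End K E) d₁))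
    (hE₂ : E₂ = LinearMap.ker (aeval (u : Module.End K E) d₂)) :
    (∀ x ∈ E₁, u x ∈ E₁) ∧ (∀ x ∈ E₂, u x ∈ E₂) ∧
    IsCompl E₁ E₂ ∧
    (∀ x ∈ E₁, ∀ y ∈ E₂, B x y = 0) ∧
    (∀ x ∈ E₁, (∀ y ∈ E₁, B x y = 0) → x = 0) ∧
    (∀ x ∈ E₂, (∀ y ∈ E₂, B x y = 0) → x = 0) := by
  set U : Module.End K E := (u : Module.End K E) with hUdef
  set V : Module.End K E := (u.symm : Module.End K E) with hVdef
  -- adjoint relation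
  have hB1 : ∀ x y, B x (u y) = B (u.symm x) y := by
    intro x y
    nth_rewrite 1 [← u.apply_symm_apply x]
    exact hu _ _
  have hBpow : ∀ (i : ℕ) (x y : E), B x ((U ^ i) y) = B ((V ^ i) x) y := by
    intro i
    induction i with
    | zero => intro x y; simp
    | succ n ih =>
      intro x y
      rw [pow_succ U, pow_succ' V, Module.End.mul_apply, Module.End.mul_apply]
      have hUy : U y = u y := rfl
      have hVx : V x = u.symm x := rfl
      rw [hUy, ih, hB1]
      rfl
  have hBaeval : ∀ (f : K[X]) (x y : E), B x (aeval U f y) = B (aeval V f x) y := by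
    intro f
    induction f using Polynomial.induction_on' with
    | add p q hp hq => intro x y; simp [hp, hq]
    | monomial n a =>
      intro x y
      simp only [aeval_monomial, Module.End.mul_apply, Module.algebraMap_end_apply,
        map_smul, LinearMap.smul_apply, LinearMap.map_smul₂]
      rw [hBpow n x y]
  -- kernel transfer to u⁻¹
  have hker : ∀ (d : K[X]) (c : K), c ≠ 0 → d.reverse = c • d →
      ∀ x, aeval U d x = 0 → aeval V d x = 0 := by
    intro d c hc hrev x hx
    have h1 : aeval U d.reverse x = 0 := by
      rw [hrev, map_smul]
      simp [hx]
    have h2 := congrArg (fun f : Module.End K E => f x) (pow_mul_aeval_symm u d)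
    simp only [Module.End.mul_apply] at h2
    have h3 : (U ^ d.natDegree) ((aeval V d) x) = 0 := by
      rw [h2]; exact h1
    have hinj : Function.Injective (U ^ d.natDegree) := by
      intro a b hab
      simp only [Module.End.pow_apply] at hab
      exact Function.Injective.iterate u.injective d.natDegree hab
    have h4 : (U ^ d.natDegree) ((aeval V d) x) = (U ^ d.natDegree) 0 := by
      rw [map_zero]; exact h3
    exact hinj h4
  -- invariance
  have hcommU : ∀ d : K[X], aeval U d * U = U * aeval U d := by
    intro d
    have h1 : aeval U (d * X) = aeval U (X * d) := by rw [mul_comm]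
    simpa [map_mul, aeval_X] using h1
  have hinv : ∀ (d : K[X]) (x : E), aeval U d x = 0 → aeval U d (u x) = 0 := by
    intro d x hx
    have h := congrArg (fun f : Module.End K E => f x) (hcommU d)
    simp only [Module.End.mul_apply] at h
    have hUx : U x = u x := rfl
    rw [← hUx, h, hx, map_zero]
  have hinv₁ : ∀ x ∈ E₁, u x ∈ E₁ := by
    intro x hx
    rw [hE₁] at hx ⊢
    exact LinearMap.mem_ker.mpr (hinv d₁ x (LinearMap.mem_ker.mp hx))
  have hinv₂ : ∀ x ∈ E₂, u x ∈ E₂ := by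
    intro x hx
    rw [hE₂] at hx ⊢
    exact LinearMap.mem_ker.mpr (hinv d₂ x (LinearMap.mem_ker.mp hx))
  -- direct sum
  have hann : aeval U (d₁ * d₂) = 0 := by rw [← hmin]; exact minpoly.aeval K U
  have hdisj : Disjoint E₁ E₂ := by
    rw [hE₁, hE₂]; exact Polynomial.disjoint_ker_aeval_of_isCoprime U hcop
  have hsup : E₁ ⊔ E₂ = ⊤ := by
    rw [hE₁, hE₂, Polynomial.sup_ker_aeval_eq_ker_aeval_mul_of_coprime U hcop, hann,
      LinearMap.ker_zero]
  have hisCompl : IsCompl E₁ E₂ := ⟨hdisj, codisjoint_iff.mpr hsup⟩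
  -- orthogonality
  have horth : ∀ x ∈ E₁, ∀ y ∈ E₂, B x y = 0 := by
    intro x hx y hy
    obtain ⟨a, b, hab⟩ := hcop
    have hx1 : aeval U d₁ x = 0 := by rw [hE₁] at hx; exact LinearMap.mem_ker.mp hx
    have hVx : aeval V d₁ x = 0 := hker d₁ c₁ hc₁ hrev₁ x hx1
    have hy2 : aeval U d₂ y = 0 := by rw [hE₂] at hy; exact LinearMap.mem_ker.mp hy
    have hy' : aeval U (a * d₁) y = y := by
      have h := congrArg (fun f : K[X] => aeval U f y) hab
      simp only [map_add, map_mul, LinearMap.add_apply, Module.End.mul_apply, hy2, map_zero,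
        map_one, Module.End.one_apply, add_zero] at h
      rw [map_mul, Module.End.mul_apply]
      exact h
    calc B x y = B x (aeval U (a * d₁) y) := by rw [hy']
      _ = B (aeval V (a * d₁) x) y := hBaeval _ _ _
      _ = 0 := by rw [map_mul, Module.End.mul_apply, hVx, map_zero]; simp
  -- antisymmetry
  have hskew : ∀ x y : E, B y x = -B x y := by
    intro x y
    have h := halt (x + y)
    simp only [map_add, LinearMap.add_apply, halt] at h
    linear_combination h
  refine ⟨hinv₁, hinv₂, hisCompl, horth, ?_, ?_⟩
  · intro x hx hortho
    apply hnd x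
    intro y
    have hy : y ∈ E₁ ⊔ E₂ := hsup ▸ Submodule.mem_top
    obtain ⟨y₁, hy₁, y₂, hy₂, rfl⟩ := Submodule.mem_sup.mp hy
    rw [map_add, hortho y₁ hy₁, horth x hx y₂ hy₂, add_zero]
  · intro x hx hortho
    apply hnd x
    intro y
    have hy : y ∈ E₁ ⊔ E₂ := hsup ▸ Submodule.mem_top
    obtain ⟨y₁, hy₁, y₂, hy₂, rfl⟩ := Submodule.mem_sup.mp hy
    rw [map_add, hortho y₂ hy₂, hskew y₁ x, horth y₁ hy₁ x hx, neg_zero, add_zero]
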